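/- Let ζ : [0,∞) → [0,1] be a charge curve: strictly increasing on [0, T], equal to 1 for t ≥ T, differentiable with monotonically non-increasing derivative ζ'. Define the charge increment function Δζ(y, t) = ζ(ζ⁻¹(y) + t) − y for y ∈ [0,1] and t ≥ 0. Then for every fixed t ≥ 0, the map y ↦ Δζ(y, t) is monotonically non-increasing in y on [0, 1]. -/

import Mathlib

/-- For a charge curve ζ (strictly increasing on [0,T], equal to 1 beyond T,
differentiable with non-increasing derivative) with inverse ζinv on [0,1], the charge
increment function y ↦ ζ(ζ⁻¹(y) + t) − y is monotonically non-increasing in y on [0,1]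
for each fixed t ≥ 0. -/
theorem charge_increment_antitone
    (ζ ζinv : ℝ → ℝ) (T : ℝ) (hT : 0 < T)
    (hmono : StrictMonoOn ζ (Set.Icc 0 T))
    (h0 : ζ 0 = 0)
    (h1 : ∀ t, T ≤ t → ζ t = 1)
    (hdiff : ∀ t, 0 ≤ t → DifferentiableAt ℝ ζ t)
    (hderiv : ∀ s t : ℝ, 0 ≤ s → s ≤ t → deriv ζ t ≤ deriv ζ s)
    (hinv : ∀ y ∈ Set.Icc (0:ℝ) 1, ζinv y ∈ Set.Icc 0 T ∧ ζ (ζinv y) = y) :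
    ∀ t : ℝ, 0 ≤ t →
      AntitoneOn (fun y => ζ (ζinv y + t) - y) (Set.Icc 0 1) := by
  intro t ht
  -- the shifted difference function is antitone on [0, ∞)
  have hg : AntitoneOn (fun x => ζ (x + t) - ζ x) (Set.Ici (0:ℝ)) := by
    have hdiffg : ∀ x ∈ Set.Ici (0:ℝ), DifferentiableAt ℝ (fun x => ζ (x + t) - ζ x) x := by
      intro x hx
      have h1' : DifferentiableAt ℝ (fun x => ζ (x + t)) x := by
        have := (hdiff (x + t) (by simp only [Set.mem_Ici] at hx; linarith)).comp x
          ((differentiableAt_id.add_const t))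
        exact this
      exact h1'.sub (hdiff x hx)
    apply antitoneOn_of_deriv_nonpos (convex_Ici 0)
    · exact fun x hx => (hdiffg x hx).continuousAt.continuousWithinAt
    · intro x hx
      rw [interior_Ici] at hx
      exact (hdiffg x (Set.mem_Ici.mpr (le_of_lt hx))).differentiableWithinAt
    · intro x hx
      rw [interior_Ici] at hx
      have hx0 : (0:ℝ) ≤ x := le_of_lt hx
      have h1' : DifferentiableAt ℝ (fun x => ζ (x + t)) x := by
        have := (hdiff (x + t) (by linarith)).comp x
          ((differentiableAt_id.add_const t))
        exact this
      have hder : deriv (fun x => ζ (x + t) - ζ x) x = deriv ζ (x + t) - deriv ζ x := by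
        rw [deriv_fun_sub h1' (hdiff x hx0), deriv_comp_add_const]
      rw [hder]
      have := hderiv x (x + t) hx0 (by linarith)
      linarith
  intro y₁ hy₁ y₂ hy₂ hy
  obtain ⟨hx₁, hζ₁⟩ := hinv y₁ hy₁
  obtain ⟨hx₂, hζ₂⟩ := hinv y₂ hy₂
  have hxle : ζinv y₁ ≤ ζinv y₂ := by
    by_contra h
    push_neg at h
    have := hmono hx₂ hx₁ h
    rw [hζ₁, hζ₂] at this
    linarith
  have := hg hx₁.1 (le_trans hx₁.1 hxle) hxle
  simp only [Set.mem_Ici] at this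
  dsimp only
  rw [hζ₁, hζ₂] at this
  linarith
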